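/- arXiv:1211.6064 — 4 statements merged into one kernel-verified Lean document; each statement's English description precedes it below -/
import Mathlib

section
/- For every M > 1 the cone C(M) ⊆ B^n of vertex e₁ and amplitude M is admissible at e₁; more precisely, for every ε > 0 there exists δ > 0 such that for every z ∈ C(M) ∩ B(e₁,δ) one has π(z) ∈ C(M) and k(z,π(z)) < ε. -/
open Metric Filter Set Topology

/-- Inverse hyperbolic tangent. -/
noncomputable def arctanh (x : ℝ) : ℝ := (1/2) * Real.log ((1 + x) / (1 - x))

/-- The point `e₁ = (1,0,…,0)` of `ℂ^(n+1)`. -/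
noncomputable def e1 (n : ℕ) : EuclideanSpace ℂ (Fin (n+1)) := EuclideanSpace.single 0 1

/-- The Kobayashi distance of the unit ball `B^(n+1)`: `k(a,b) = arctanh σ(a,b)`. -/
noncomputable def kB {n : ℕ} (a b : EuclideanSpace ℂ (Fin (n+1))) : ℝ :=
  arctanh (Real.sqrt (1 - (1 - ‖a‖^2) * (1 - ‖b‖^2) / ‖1 - (inner ℂ a b : ℂ)‖^2))

/-- The projection `π(z) = ⟨z,e₁⟩e₁` (where `⟨z,w⟩ = Σ z_j conj(w_j)`). -/
noncomputable def projE1 {n : ℕ} (z : EuclideanSpace ℂ (Fin (n+1))) : EuclideanSpace ℂ (Fin (n+1)) :=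
  (inner ℂ (e1 n) z : ℂ) • e1 n

/-- The Stolz region `K(M,s)`. -/
def StolzK (M s : ℝ) : Set ℂ :=
  {ζ | ‖ζ‖ < 1 ∧ ‖1 - ζ‖ < M * (1 - ‖ζ‖) ∧ ‖1 - ζ‖ < s}

/-- The cone `C(M)` of vertex `e₁` and amplitude `M`. -/
def coneB (n : ℕ) (M : ℝ) : Set (EuclideanSpace ℂ (Fin (n+1))) :=
  {z | ‖z‖ < 1 ∧ ‖e1 n - z‖ < M * (1 - ‖z‖)}

/-- `e₁` is a boundary regular fixed point of `f`. -/
def IsBRFP {n : ℕ} (f : EuclideanSpace ℂ (Fin (n+1)) → EuclideanSpace ℂ (Fin (n+1))) : Prop :=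
  Filter.liminf (fun z => ENNReal.ofReal ((1 - ‖f z‖) / (1 - ‖z‖))) (𝓝[Metric.ball 0 1] (e1 n)) < ⊤ ∧
  Filter.Tendsto (fun r : ℝ => f ((r : ℂ) • e1 n)) (𝓝[Set.Ioo (0:ℝ) 1] 1) (𝓝 (e1 n))

/-- The determinant of the complex differential of `f` at `z`. -/
noncomputable def jacDet {n : ℕ} (f : EuclideanSpace ℂ (Fin (n+1)) → EuclideanSpace ℂ (Fin (n+1)))
    (z : EuclideanSpace ℂ (Fin (n+1))) : ℂ :=
  LinearMap.det (fderiv ℂ f z).toLinearMap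

/-- `e₁` is a boundary super-regular fixed point of `f`. -/
def IsBSRFP {n : ℕ} (f : EuclideanSpace ℂ (Fin (n+1)) → EuclideanSpace ℂ (Fin (n+1))) : Prop :=
  IsBRFP f ∧ ∀ M > 1, ∃ c > 0, ∀ ζ : ℕ → ℂ, (∀ k, ζ k ∈ StolzK M 2) →
    Filter.Tendsto ζ atTop (𝓝 1) →
    ENNReal.ofReal c ≤
      Filter.liminf (fun k => ENNReal.ofReal ‖jacDet f ((ζ k) • e1 n)‖) atTop

/-- `A ⊆ B^(n+1)` is admissible at `e₁`. -/
def AdmissibleB {n : ℕ} (A : Set (EuclideanSpace ℂ (Fin (n+1)))) : Prop :=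
  A ⊆ Metric.ball 0 1 ∧ e1 n ∈ closure A ∧
  ∀ ε > 0, ∃ δ > 0, ∃ M > 1, ∀ z ∈ A ∩ Metric.ball (e1 n) δ,
    projE1 z ∈ coneB n M ∧ kB z (projE1 z) < ε

/-- Monotone bound for `arctanh`. -/
lemma arctanh_lt_of_le {ε x : ℝ} (hε : 0 < ε) (hx0 : 0 ≤ x)
    (hx : x ≤ (Real.exp ε - 1) / (Real.exp ε + 1)) : arctanh x < ε := by
  set E := Real.exp ε with hE
  have hE1 : 1 < E := by nlinarith [Real.add_one_le_exp ε]
  set t := (E - 1) / (E + 1) with htdef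
  have ht1 : t < 1 := by
    rw [htdef, div_lt_one (by linarith)]; linarith
  have hx1 : x < 1 := lt_of_le_of_lt hx ht1
  have hratio : (1 + t) / (1 - t) = E := by
    rw [htdef]; field_simp; ring
  have hle : (1 + x) / (1 - x) ≤ (1 + t) / (1 - t) := by
    apply div_le_div₀ (by linarith) (by linarith) (by linarith) (by linarith)
  have hpos : 0 < (1 + x) / (1 - x) := div_pos (by linarith) (by linarith)
  have hl : Real.log ((1 + x) / (1 - x)) ≤ Real.log E := by
    rw [← hratio]; exact Real.log_le_log hpos hle
  have hlogE : Real.log E = ε := Real.log_exp ε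
  unfold arctanh
  nlinarith [hl, hlogE]

set_option maxHeartbeats 2000000 in
/-- The purely arithmetic core of the admissibility estimate. -/
lemma main_arith (ε M N r W D b : ℝ) (hε : 0 < ε) (hM : 1 < M) (hz1 : N < 1)
    (hr_le : r ≤ N) (hr0 : 0 ≤ r) (hW0 : 0 ≤ W) (hD0 : 0 ≤ D)
    (hp1 : N^2 = r^2 + W^2) (hp2 : D^2 = b^2 + W^2)
    (h1rb : 1 - r ≤ b) (hbD : b ≤ D) (hz2 : D < M * (1 - N))
    (hDδ : D < ((Real.exp ε - 1) / (Real.exp ε + 1))^2 / M^2) :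
    arctanh (Real.sqrt (1 - (1 - N^2) * (1 - r^2) / (1 - r^2)^2)) < ε := by
  set t := (Real.exp ε - 1) / (Real.exp ε + 1) with htdef
  have hE1 : 1 < Real.exp ε := by nlinarith [Real.add_one_le_exp ε]
  have ht0 : 0 < t := div_pos (by linarith) (by linarith)
  have hM0 : (0:ℝ) < M := by linarith
  have hr1 : r < 1 := lt_of_le_of_lt hr_le hz1
  have hr2pos : (0:ℝ) < 1 - r^2 := by nlinarith
  have hXval : 1 - (1 - N^2) * (1 - r^2) / (1 - r^2)^2 = W^2 / (1 - r^2) := by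
    field_simp
    nlinarith [hp1]
  have hXlt : W^2 / (1 - r^2) < t^2 := by
    have hsq : D^2 < (M * (1 - N))^2 := by
      have h := mul_self_lt_mul_self hD0 hz2
      nlinarith [h]
    have hW2 : W^2 < M^2 * (1 - N)^2 := by nlinarith [sq_nonneg b, hsq, hp2]
    have h3 : (1 - N)^2 ≤ (1 - r)^2 := by
      have h := mul_self_le_mul_self (by linarith : (0:ℝ) ≤ 1 - N) (by linarith : 1 - N ≤ 1 - r)
      nlinarith [h]
    have h4 : W^2 < M^2 * (1 - r)^2 :=
      hW2.trans_le (mul_le_mul_of_nonneg_left h3 (sq_nonneg M))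
    have h5 : W^2 / (1 - r^2) < M^2 * (1 - r) := by
      rw [div_lt_iff₀ hr2pos]
      nlinarith [h4, mul_nonneg (mul_nonneg (sq_nonneg M) (sq_nonneg (1 - r))) hr0]
    have h6 : M^2 * (1 - r) ≤ M^2 * D :=
      mul_le_mul_of_nonneg_left (by linarith : 1 - r ≤ D) (sq_nonneg M)
    have h7 : M^2 * D < t^2 := by
      have h8 : M^2 * D < M^2 * (t^2 / M^2) :=
        mul_lt_mul_of_pos_left hDδ (by positivity)
      calc M^2 * D < M^2 * (t^2 / M^2) := h8
        _ = t^2 := by field_simp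
    linarith
  have hsqrt : Real.sqrt (W^2 / (1 - r^2)) ≤ t := by
    have := (Real.sqrt_lt' ht0).mpr hXlt
    linarith
  rw [hXval]
  exact arctanh_lt_of_le hε (Real.sqrt_nonneg _) hsqrt

set_option maxHeartbeats 2000000 in
/-- **Lemma (cones are admissible at `e₁`).**
For every `M > 1` and every `ε > 0` there exists `δ > 0` such that for every
`z ∈ C(M) ∩ B(e₁,δ)` one has `π(z) ∈ C(M)` and `k(z,π(z)) < ε`. -/
theorem cone_admissible_at_e1 {n : ℕ} :
    ∀ M > 1, ∀ ε > 0, ∃ δ > 0,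
      ∀ z ∈ coneB n M ∩ Metric.ball (e1 n) δ,
        projE1 z ∈ coneB n M ∧ kB z (projE1 z) < ε := by
  intro M hM ε hε
  set t := (Real.exp ε - 1) / (Real.exp ε + 1) with htdef
  have hE1 : 1 < Real.exp ε := by nlinarith [Real.add_one_le_exp ε]
  have ht0 : 0 < t := div_pos (by linarith) (by linarith)
  have hM0 : (0:ℝ) < M := by linarith
  refine ⟨t^2 / M^2, by positivity, ?_⟩
  rintro z ⟨⟨hz1, hz2⟩, hzδ⟩
  set a : ℂ := z 0 with ha
  have h_inner : (inner ℂ (e1 n) z : ℂ) = a := by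
    simp [e1, EuclideanSpace.inner_single_left, ha]
  have hproj : projE1 z = a • e1 n := by rw [projE1, h_inner]
  have he1norm : ‖e1 n‖ = 1 := by simp [e1]
  set r : ℝ := ‖a‖ with hr
  have hnormproj : ‖projE1 z‖ = r := by
    rw [hproj, norm_smul, he1norm]; simp [hr]
  have hr_le : r ≤ ‖z‖ := by
    have := norm_inner_le_norm (𝕜 := ℂ) (e1 n) z
    rwa [h_inner, he1norm, one_mul] at this
  have hr0 : 0 ≤ r := norm_nonneg a
  have hr1 : r < 1 := lt_of_le_of_lt hr_le hz1
  set w : EuclideanSpace ℂ (Fin (n+1)) := z - a • e1 n with hw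
  have h_orth : (inner ℂ (e1 n) w : ℂ) = 0 := by
    rw [hw, inner_sub_right, inner_smul_right, h_inner]
    simp [e1, EuclideanSpace.inner_single_left]
  set N : ℝ := ‖z‖ with hN
  set W : ℝ := ‖w‖ with hW
  set D : ℝ := ‖e1 n - z‖ with hD
  set b : ℝ := ‖1 - a‖ with hb
  have hpyth1 : N^2 = r^2 + W^2 := by
    have hzeq : z = a • e1 n + w := by rw [hw]; abel
    have h0 : (inner ℂ (a • e1 n) w : ℂ) = 0 := by
      rw [inner_smul_left, h_orth, mul_zero]
    calc N^2 = ‖a • e1 n + w‖^2 := by rw [hN, ← hzeq]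
      _ = ‖a • e1 n‖^2 + 2 * (RCLike.re (inner ℂ (a • e1 n) w : ℂ)) + ‖w‖^2 :=
          norm_add_sq (𝕜 := ℂ) _ _
      _ = r^2 + W^2 := by
          rw [h0, norm_smul, he1norm]; simp [hr, hW]
  have hpyth2 : D^2 = b^2 + W^2 := by
    have heq : e1 n - z = (1 - a) • e1 n + (-w) := by
      rw [hw, sub_smul, one_smul]; abel
    have h0 : (inner ℂ ((1 - a) • e1 n) (-w) : ℂ) = 0 := by
      rw [inner_neg_right, inner_smul_left, h_orth, mul_zero, neg_zero]
    calc D^2 = ‖(1 - a) • e1 n + (-w)‖^2 := by rw [hD, heq]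
      _ = ‖(1 - a) • e1 n‖^2 + 2 * (RCLike.re (inner ℂ ((1 - a) • e1 n) (-w) : ℂ)) + ‖(-w)‖^2 :=
          norm_add_sq (𝕜 := ℂ) _ _
      _ = b^2 + W^2 := by
          rw [h0, norm_smul, he1norm, norm_neg]; simp [hb, hW]
  have hbD : b ≤ D := by
    nlinarith [hpyth2, sq_nonneg W, norm_nonneg (1 - a), norm_nonneg (e1 n - z)]
  have h1rb : 1 - r ≤ b := by
    have := norm_sub_norm_le (1 : ℂ) a
    simpa [hb, hr] using this
  have hDδ : D < t^2 / M^2 := by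
    have hdd : dist z (e1 n) = D := by rw [hD, dist_eq_norm, norm_sub_rev]
    rw [mem_ball, hdd] at hzδ; exact hzδ
  have hcone : projE1 z ∈ coneB n M := by
    refine ⟨by rw [hnormproj]; exact hr1, ?_⟩
    have hbe : ‖e1 n - projE1 z‖ = b := by
      rw [hproj, hb]
      have h1 : e1 n - a • e1 n = (1 - a) • e1 n := by rw [sub_smul, one_smul]
      rw [h1, norm_smul, he1norm]; ring
    rw [hbe, hnormproj]
    calc b ≤ D := hbD
      _ < M * (1 - N) := hz2
      _ ≤ M * (1 - r) := mul_le_mul_of_nonneg_left (by linarith) (le_of_lt hM0)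
  refine ⟨hcone, ?_⟩
  have hip : (inner ℂ z (projE1 z) : ℂ) = ((r^2 : ℝ) : ℂ) := by
    rw [hproj, inner_smul_right, ← inner_conj_symm, h_inner]
    rw [Complex.mul_conj, Complex.normSq_eq_norm_sq, hr]
  have hr2pos : (0:ℝ) < 1 - r^2 := by
    have := pow_lt_one₀ hr0 hr1 two_ne_zero
    linarith
  have habs : ‖1 - (inner ℂ z (projE1 z) : ℂ)‖ = 1 - r^2 := by
    rw [hip]
    have h1 : (1 : ℂ) - ((r^2 : ℝ) : ℂ) = ((1 - r^2 : ℝ) : ℂ) := by push_cast; ring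
    rw [h1, Complex.norm_real, Real.norm_eq_abs, abs_of_pos hr2pos]
  rw [kB, habs, hnormproj]
  exact main_arith ε M N r W D b hε hM hz1 hr_le hr0 (norm_nonneg w) (norm_nonneg _)
    hpyth1 hpyth2 h1rb hbD hz2 hDδ
end

section
/- Let c > 0 and t' ∈ (0,1). Then there exists r' = r'(c,t') > 0 such that for every holomorphic map f : B^n → B^n with f(0) = 0 and |det(df_0)| ≥ c, one has B(0,r') ⊆ f(B(0,t')). -/
open Metric Filter Set Topology

section

variable {E F : Type*} [NormedAddCommGroup E] [NormedSpace ℂ E]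
  [NormedAddCommGroup F] [NormedSpace ℂ F]

/-- Vector-valued several-variable Schwarz lemma. -/
theorem my_schwarz_map {g : E → F} {R M : ℝ} (hR : 0 < R)
    (hd : DifferentiableOn ℂ g (ball 0 R)) (hm : MapsTo g (ball 0 R) (ball 0 M))
    (h0 : g 0 = 0) {z : E} (hz : z ∈ ball 0 R) : ‖g z‖ ≤ M / R * ‖z‖ := by
  rcases eq_or_ne z 0 with rfl | hz0
  · have hM : 0 < M := by
      have := hm (mem_ball_self hR)
      rw [h0] at this
      simpa using this
    rw [h0]
    simp only [norm_zero, mul_zero, le_refl]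
  have hzn : 0 < ‖z‖ := norm_pos_iff.2 hz0
  set φ : ℂ → F := fun l => g (l • z) with hφ
  have hsm : ∀ l : ℂ, l ∈ ball (0:ℂ) (R / ‖z‖) → (l • z) ∈ ball (0:E) R := by
    intro l hl
    simp only [mem_ball, dist_zero_right] at hl ⊢
    rw [norm_smul]
    calc ‖l‖ * ‖z‖ < (R / ‖z‖) * ‖z‖ := by gcongr
    _ = R := by field_simp
  have hdφ : DifferentiableOn ℂ φ (ball 0 (R / ‖z‖)) := by
    exact hd.comp ((differentiable_id.smul_const z).differentiableOn) hsm
  have hmφ : MapsTo φ (ball 0 (R / ‖z‖)) (ball (φ 0) M) := by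
    intro l hl
    have := hm (hsm l hl)
    simpa [hφ, h0] using this
  have h1 : (1:ℂ) ∈ ball (0:ℂ) (R / ‖z‖) := by
    simp only [mem_ball, dist_zero_right, norm_one]
    rw [lt_div_iff₀ hzn, one_mul]
    simpa [mem_ball, dist_zero_right] using hz
  have := Complex.dist_le_div_mul_dist_of_mapsTo_ball hdφ (hmφ.mono_right ball_subset_closedBall) h1
  rw [hφ] at this
  simp only [one_smul, zero_smul, h0, dist_zero_right, dist_zero_left] at this
  calc ‖g z‖ ≤ M / (R / ‖z‖) := by simpa using this
  _ = M / R * ‖z‖ := by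
      field_simp

/-- Schwarz bound on the differential at the center. -/
theorem my_schwarz_fderiv {g : E → F} {R M : ℝ} (hR : 0 < R)
    (hd : DifferentiableOn ℂ g (ball 0 R)) (hm : MapsTo g (ball 0 R) (ball 0 M))
    (h0 : g 0 = 0) (v : E) : ‖fderiv ℂ g 0 v‖ ≤ M / R * ‖v‖ := by
  rcases eq_or_ne v 0 with rfl | hv0
  · simp
  have hvn : 0 < ‖v‖ := norm_pos_iff.2 hv0
  set φ : ℂ → F := fun l => g (l • v) with hφ
  have hsm : ∀ l : ℂ, l ∈ ball (0:ℂ) (R / ‖v‖) → (l • v) ∈ ball (0:E) R := by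
    intro l hl
    simp only [mem_ball, dist_zero_right] at hl ⊢
    rw [norm_smul]
    calc ‖l‖ * ‖v‖ < (R / ‖v‖) * ‖v‖ := by gcongr
    _ = R := by field_simp
  have hdφ : DifferentiableOn ℂ φ (ball 0 (R / ‖v‖)) :=
    hd.comp ((differentiable_id.smul_const v).differentiableOn) hsm
  have hmφ : MapsTo φ (ball 0 (R / ‖v‖)) (ball (φ 0) M) := by
    intro l hl
    have := hm (hsm l hl)
    simpa [hφ, h0] using this
  have hg0 : DifferentiableAt ℂ g 0 :=
    hd.differentiableAt (isOpen_ball.mem_nhds (by simp [hR]))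
  have hder : HasDerivAt φ (fderiv ℂ g 0 v) 0 := by
    have h1 : HasDerivAt (fun l : ℂ => l • v) v 0 := by
      simpa using (hasDerivAt_id (0:ℂ)).smul_const v
    have h2 : HasFDerivAt g (fderiv ℂ g 0) ((0:ℂ) • v) := by
      simpa using hg0.hasFDerivAt
    exact h2.comp_hasDerivAt (0:ℂ) h1
  have hRv : 0 < R / ‖v‖ := by positivity
  have := Complex.norm_deriv_le_div_of_mapsTo_ball hdφ (hmφ.mono_right ball_subset_closedBall) hRv
  rw [hder.deriv] at this
  calc ‖fderiv ℂ g 0 v‖ ≤ M / (R / ‖v‖) := this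
  _ = M / R * ‖v‖ := by
      field_simp

end
section

theorem my_coord_le_norm {m : ℕ} (x : EuclideanSpace ℂ (Fin m)) (i : Fin m) :
    ‖x i‖ ≤ ‖x‖ := by
  rw [EuclideanSpace.norm_eq]
  have h1 : ‖x i‖ = Real.sqrt (‖x i‖ ^ 2) := by
    rw [Real.sqrt_sq (norm_nonneg _)]
  rw [h1]
  apply Real.sqrt_le_sqrt
  exact Finset.single_le_sum (fun j _ => sq_nonneg ‖x j‖) (Finset.mem_univ i)

theorem my_det_bound {m : ℕ} (N : Matrix (Fin m) (Fin m) ℂ)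
    (h : ∀ i j, ‖N i j‖ ≤ 1) :
    ‖N.det‖ ≤ m.factorial := by
  rw [Matrix.det_apply]
  calc ‖∑ σ : Equiv.Perm (Fin m), Equiv.Perm.sign σ • ∏ i, N (σ i) i‖
      ≤ ∑ σ : Equiv.Perm (Fin m), ‖Equiv.Perm.sign σ • ∏ i, N (σ i) i‖ :=
        norm_sum_le _ _
  _ ≤ ∑ _σ : Equiv.Perm (Fin m), 1 := by
      apply Finset.sum_le_sum
      intro σ _
      rw [Units.smul_def, zsmul_eq_mul, norm_mul]
      have h1 : ‖((Equiv.Perm.sign σ : ℤ) : ℂ)‖ = 1 := by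
        rcases Int.isUnit_iff.1 (Equiv.Perm.sign σ).isUnit with h' | h' <;> simp [h']
      rw [h1, one_mul, norm_prod]
      apply Finset.prod_le_one (fun j _ => norm_nonneg _) (fun j _ => h _ _)
  _ = m.factorial := by
      rw [Finset.sum_const, Finset.card_univ, nsmul_eq_mul, mul_one]
      norm_cast
      simp [Fintype.card_perm]

theorem my_inverse_bound {m : ℕ} (A : EuclideanSpace ℂ (Fin m) →L[ℂ] EuclideanSpace ℂ (Fin m))
    {c : ℝ} (hc : 0 < c) (hA : ∀ v, ‖A v‖ ≤ ‖v‖)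
    (hdet : c ≤ ‖LinearMap.det (A : EuclideanSpace ℂ (Fin m) →ₗ[ℂ] EuclideanSpace ℂ (Fin m))‖) :
    ∃ S : EuclideanSpace ℂ (Fin m) →L[ℂ] EuclideanSpace ℂ (Fin m),
      (∀ x, A (S x) = x) ∧ ∀ x, ‖S x‖ ≤ (m ^ 2 * m.factorial / c) * ‖x‖ := by
  set b : Module.Basis (Fin m) ℂ (EuclideanSpace ℂ (Fin m)) := PiLp.basisFun 2 ℂ (Fin m) with hb
  set M : Matrix (Fin m) (Fin m) ℂ := LinearMap.toMatrix b b (A : _ →ₗ[ℂ] _) with hM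
  have hdetM : M.det = LinearMap.det (A : EuclideanSpace ℂ (Fin m) →ₗ[ℂ] EuclideanSpace ℂ (Fin m)) := by
    rw [hM]; exact LinearMap.det_toMatrix b _
  have hdetM' : c ≤ ‖M.det‖ := by rw [hdetM]; exact hdet
  have hdet0 : M.det ≠ 0 := by
    intro h
    rw [h] at hdetM'
    simp at hdetM'
    linarith
  have hMentry : ∀ i j, ‖M i j‖ ≤ 1 := by
    intro i j
    rw [hM, LinearMap.toMatrix_apply]
    have hrepr : (b.repr ((A : EuclideanSpace ℂ (Fin m) →ₗ[ℂ] EuclideanSpace ℂ (Fin m)) (b j))) i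
        = (A (b j)) i := PiLp.basisFun_repr _ _ _ _ _
    rw [hrepr]
    calc ‖(A (b j)) i‖ ≤ ‖A (b j)‖ := my_coord_le_norm _ _
    _ ≤ ‖b j‖ := hA _
    _ = 1 := by
        rw [hb]
        have : (PiLp.basisFun 2 ℂ (Fin m)) j = EuclideanSpace.single j 1 :=
          PiLp.basisFun_apply _ _ _ _
        rw [this, EuclideanSpace.norm_single, norm_one]
  -- entries of the inverse
  have hinv_entry : ∀ i j, ‖M⁻¹ i j‖ ≤ m.factorial / c := by
    intro i j
    rw [Matrix.inv_def, Matrix.smul_apply, smul_eq_mul, norm_mul]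
    have h1 : ‖Ring.inverse M.det‖ = (‖M.det‖)⁻¹ := by
      rw [Ring.inverse_eq_inv, norm_inv]
    rw [h1]
    have h2 : ‖M.adjugate i j‖ ≤ m.factorial := by
      rw [Matrix.adjugate_apply]
      apply my_det_bound
      intro k l
      by_cases hk : k = j
      · subst hk
        rw [Matrix.updateRow_self]
        by_cases hl : l = i
        · subst hl; simp
        · simp [Pi.single_eq_of_ne hl]
      · rw [Matrix.updateRow_ne hk]
        exact hMentry _ _
    calc (‖M.det‖)⁻¹ * ‖M.adjugate i j‖
        ≤ c⁻¹ * m.factorial := by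
          apply mul_le_mul _ h2 (norm_nonneg _) (by positivity)
          exact inv_anti₀ hc hdetM'
    _ = m.factorial / c := by ring
  -- the inverse CLM
  set S : EuclideanSpace ℂ (Fin m) →L[ℂ] EuclideanSpace ℂ (Fin m) :=
    Matrix.toEuclideanCLM (𝕜 := ℂ) M⁻¹ with hS
  have hAeq : Matrix.toEuclideanCLM (𝕜 := ℂ) M = A := by
    apply ContinuousLinearMap.coe_injective
    rw [Matrix.coe_toEuclideanCLM_eq_toEuclideanLin, Matrix.toEuclideanLin_eq_toLin, hM,
      Matrix.toLin_toMatrix]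
  have hMunit : IsUnit M.det := isUnit_iff_ne_zero.2 hdet0
  refine ⟨S, ?_, ?_⟩
  · intro x
    have : (Matrix.toEuclideanCLM (𝕜 := ℂ) M) ((Matrix.toEuclideanCLM (𝕜 := ℂ) M⁻¹) x)
        = (Matrix.toEuclideanCLM (𝕜 := ℂ) (M * M⁻¹)) x := by
      rw [map_mul]; rfl
    rw [hS, ← hAeq, this, Matrix.mul_nonsing_inv _ hMunit, map_one,
      ContinuousLinearMap.one_apply]
  · intro x
    -- (S x) i = (M⁻¹ *ᵥ x) i
    have happ : ∀ i, (S x) i = (M⁻¹).mulVec (fun j => x j) i := by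
      intro i
      rfl
    have hcoord : ∀ i, ‖(S x) i‖ ≤ (m.factorial / c) * (m * ‖x‖) := by
      intro i
      rw [happ i, Matrix.mulVec]
      calc ‖∑ j, M⁻¹ i j * x j‖ ≤ ∑ j, ‖M⁻¹ i j * x j‖ :=
            norm_sum_le _ _
      _ ≤ ∑ _j : Fin m, (m.factorial / c) * ‖x‖ := by
          apply Finset.sum_le_sum
          intro j _
          rw [norm_mul]
          apply mul_le_mul (hinv_entry i j) (my_coord_le_norm x j) (norm_nonneg _)
            (by positivity)
      _ = (m.factorial / c) * (m * ‖x‖) := by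
          rw [Finset.sum_const, Finset.card_univ, nsmul_eq_mul]
          simp
          ring
    rw [EuclideanSpace.norm_eq]
    have : ∀ i : Fin m, ‖(S x) i‖ ^ 2 ≤ ((m.factorial / c) * (m * ‖x‖)) ^ 2 := by
      intro i
      have h' : ‖(S x) i‖ ≤ (m.factorial / c) * (m * ‖x‖) := by
        exact hcoord i
      exact pow_le_pow_left₀ (norm_nonneg _) h' 2
    calc Real.sqrt (∑ i, ‖(S x) i‖ ^ 2)
        ≤ Real.sqrt (∑ _i : Fin m, ((m.factorial / c) * (m * ‖x‖)) ^ 2) :=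
          Real.sqrt_le_sqrt (Finset.sum_le_sum fun i _ => this i)
    _ = Real.sqrt m * ((m.factorial / c) * (m * ‖x‖)) := by
          rw [Finset.sum_const, Finset.card_univ, nsmul_eq_mul]
          simp only [Fintype.card_fin]
          rw [Real.sqrt_mul (by positivity), Real.sqrt_sq (by positivity)]
    _ ≤ m * ((m.factorial / c) * (m * ‖x‖)) := by
          apply mul_le_mul_of_nonneg_right _ (by positivity)
          calc Real.sqrt m ≤ Real.sqrt ((m : ℝ) ^ 2) := by
                apply Real.sqrt_le_sqrt
                have : m ≤ m ^ 2 := Nat.le_self_pow two_ne_zero m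
                exact_mod_cast this
          _ = m := Real.sqrt_sq (by positivity)
    _ = (m ^ 2 * m.factorial / c) * ‖x‖ := by ring

end
section

variable {E : Type*} [NormedAddCommGroup E] [NormedSpace ℂ E] [CompleteSpace E]

/-- Quadratic Schwarz bound for a map vanishing to second order at 0. -/
theorem my_quad_bound {h : E → E} (hd : DifferentiableOn ℂ h (ball 0 (1/2)))
    (h0 : h 0 = 0) (hd0 : fderiv ℂ h 0 = 0)
    (hbd : ∀ y : E, y ∈ ball (0:E) (1/2) → ‖h y‖ ≤ 2 * ‖y‖)
    {w : E} (hw : w ∈ ball (0:E) (1/2)) : ‖h w‖ ≤ 8 * ‖w‖ ^ 2 := by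
  rcases eq_or_ne w 0 with rfl | hw0
  · simp [h0]
  have hwn : 0 < ‖w‖ := norm_pos_iff.2 hw0
  have hwlt : ‖w‖ < 1/2 := by simpa [mem_ball, dist_zero_right] using hw
  set T : ℝ := 1 / (2 * ‖w‖) with hT
  have hT0 : 0 < T := by positivity
  have hT1 : 1 < T := by
    rw [hT, lt_div_iff₀ (by positivity), one_mul]
    linarith
  set F : ℂ → E := fun l => h (l • w) with hF
  have hsm : ∀ l : ℂ, l ∈ ball (0:ℂ) T → (l • w) ∈ ball (0:E) (1/2) := by
    intro l hl
    simp only [mem_ball, dist_zero_right] at hl ⊢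
    rw [norm_smul]
    calc ‖l‖ * ‖w‖ < T * ‖w‖ := by gcongr
    _ = 1/2 := by rw [hT]; field_simp
  have hdF : DifferentiableOn ℂ F (ball 0 T) :=
    hd.comp ((differentiable_id.smul_const w).differentiableOn) hsm
  have hF0 : F 0 = 0 := by simp [hF, h0]
  have hderF : HasDerivAt F 0 0 := by
    have h1 : HasDerivAt (fun l : ℂ => l • w) w 0 := by
      simpa using (hasDerivAt_id (0:ℂ)).smul_const w
    have hh0 : DifferentiableAt ℂ h 0 :=
      hd.differentiableAt (isOpen_ball.mem_nhds (mem_ball_self (by norm_num)))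
    have h2 : HasFDerivAt h (fderiv ℂ h 0) ((0:ℂ) • w) := by
      simpa using hh0.hasFDerivAt
    have h3 := h2.comp_hasDerivAt (0:ℂ) h1
    rw [hd0] at h3
    simpa [hF, Function.comp_def] using h3
  have hmF : MapsTo F (ball 0 T) (ball (F 0) 1) := by
    intro l hl
    have hmem := hsm l hl
    have h1 : ‖l • w‖ < 1/2 := by simpa [mem_ball, dist_zero_right] using hmem
    have h2 := hbd _ hmem
    rw [hF0, mem_ball, dist_zero_right]
    calc ‖F l‖ ≤ 2 * ‖l • w‖ := h2
    _ < 2 * (1/2) := by gcongr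
    _ = 1 := by norm_num
  -- dslope
  set G : ℂ → E := dslope F 0 with hG
  have hGb : ∀ l ∈ ball (0:ℂ) T, ‖G l‖ ≤ 1 / T := fun l hl =>
    Complex.norm_dslope_le_div_of_mapsTo_ball hdF (hmF.mono_right ball_subset_closedBall) hl
  have hdG : DifferentiableOn ℂ G (ball 0 T) :=
    (Complex.differentiableOn_dslope (isOpen_ball.mem_nhds (mem_ball_self hT0))).2 hdF
  have hG0 : G 0 = 0 := by
    rw [hG, dslope_same, hderF.deriv]
  have hmG : MapsTo G (ball 0 T) (ball (0:E) (2/T)) := by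
    intro l hl
    rw [mem_ball, dist_zero_right]
    calc ‖G l‖ ≤ 1/T := hGb l hl
    _ < 2/T := (div_lt_div_iff_of_pos_right hT0).2 (by norm_num)
  have h1T : (1:ℂ) ∈ ball (0:ℂ) T := by
    simpa [mem_ball, dist_zero_right] using hT1
  have hG1 : ‖G 1‖ ≤ (2/T)/T * ‖(1:ℂ)‖ := my_schwarz_map hT0 hdG hmG hG0 h1T
  have hG1F : G 1 = h w := by
    rw [hG, dslope_of_ne _ (one_ne_zero), slope_def_module]
    simp [hF0, hF, h0]
  rw [hG1F, norm_one, mul_one] at hG1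
  calc ‖h w‖ ≤ (2/T)/T := hG1
  _ = 8 * ‖w‖ ^ 2 := by rw [hT]; field_simp; ring

end
section

variable {E : Type*} [NormedAddCommGroup E] [NormedSpace ℂ E] [CompleteSpace E]

theorem my_lip_bound {h : E → E} (hd : DifferentiableOn ℂ h (ball 0 (1/2)))
    (hq : ∀ y : E, y ∈ ball (0:E) (1/2) → ‖h y‖ ≤ 8 * ‖y‖ ^ 2)
    {ρ' : ℝ} (hρ0 : 0 < ρ') (hρ8 : ρ' ≤ 1/8) :
    ∀ z₁ ∈ ball (0:E) ρ', ∀ z₂ ∈ ball (0:E) ρ',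
      ‖h z₁ - h z₂‖ ≤ 64 * ρ' * ‖z₁ - z₂‖ := by
  have hsub : ball (0:E) ρ' ⊆ ball 0 (1/2) := ball_subset_ball (by linarith)
  have hfd : ∀ z ∈ ball (0:E) ρ', ‖fderiv ℂ h z‖ ≤ 64 * ρ' := by
    intro z hz
    have hzn : ‖z‖ < ρ' := by simpa [mem_ball, dist_zero_right] using hz
    apply ContinuousLinearMap.opNorm_le_bound _ (by positivity)
    intro u
    rcases eq_or_ne u 0 with rfl | hu0
    · simp
    have hun : 0 < ‖u‖ := norm_pos_iff.2 hu0
    set R₁ : ℝ := ρ' / ‖u‖ with hR₁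
    have hR₁0 : 0 < R₁ := by positivity
    set ψ : ℂ → E := fun l => h (z + l • u) with hψ
    have hsm : ∀ l : ℂ, l ∈ ball (0:ℂ) R₁ → (z + l • u) ∈ ball (0:E) (1/2) := by
      intro l hl
      simp only [mem_ball, dist_zero_right] at hl ⊢
      calc ‖z + l • u‖ ≤ ‖z‖ + ‖l‖ * ‖u‖ := by
            rw [← norm_smul]; exact norm_add_le _ _
      _ < ρ' + R₁ * ‖u‖ := by gcongr
      _ = 2 * ρ' := by rw [hR₁]; field_simp; ring
      _ ≤ 1/2 := by linarith
    have hdψ : DifferentiableOn ℂ ψ (ball 0 R₁) :=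
      hd.comp ((differentiable_const z).add (differentiable_id.smul_const u)).differentiableOn hsm
    have hmem2 : ∀ l : ℂ, l ∈ ball (0:ℂ) R₁ → ‖z + l • u‖ < 2 * ρ' := by
      intro l hl
      simp only [mem_ball, dist_zero_right] at hl
      calc ‖z + l • u‖ ≤ ‖z‖ + ‖l‖ * ‖u‖ := by
            rw [← norm_smul]; exact norm_add_le _ _
      _ < ρ' + R₁ * ‖u‖ := by gcongr
      _ = 2 * ρ' := by rw [hR₁]; field_simp; ring
    have hmψ : MapsTo ψ (ball 0 R₁) (ball (ψ 0) (64 * ρ' ^ 2)) := by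
      intro l hl
      rw [mem_ball, dist_eq_norm]
      have h1 : ‖ψ l‖ ≤ 8 * (2 * ρ') ^ 2 := by
        calc ‖ψ l‖ ≤ 8 * ‖z + l • u‖ ^ 2 := hq _ (hsm l hl)
        _ ≤ 8 * (2 * ρ') ^ 2 := by
            gcongr
            exact (hmem2 l hl).le
      have h2 : ‖ψ 0‖ ≤ 8 * ρ' ^ 2 := by
        have : ψ 0 = h z := by simp [hψ]
        rw [this]
        calc ‖h z‖ ≤ 8 * ‖z‖ ^ 2 := hq _ (hsub hz)
        _ ≤ 8 * ρ' ^ 2 := by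
            have := hzn.le
            gcongr
      calc ‖ψ l - ψ 0‖ ≤ ‖ψ l‖ + ‖ψ 0‖ := norm_sub_le _ _
      _ ≤ 8 * (2 * ρ') ^ 2 + 8 * ρ' ^ 2 := by gcongr
      _ = 40 * ρ' ^ 2 := by ring
      _ < 64 * ρ' ^ 2 := by nlinarith
    have hder : HasDerivAt ψ (fderiv ℂ h z u) 0 := by
      have h1 : HasDerivAt (fun l : ℂ => z + l • u) u 0 := by
        simpa using ((hasDerivAt_id (0:ℂ)).smul_const u).const_add z
      have hhz : DifferentiableAt ℂ h z := hd.differentiableAt (isOpen_ball.mem_nhds (hsub hz))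
      have h2 : HasFDerivAt h (fderiv ℂ h z) (z + (0:ℂ) • u) := by
        simpa using hhz.hasFDerivAt
      simpa [hψ, Function.comp_def] using h2.comp_hasDerivAt (0:ℂ) h1
    have := Complex.norm_deriv_le_div_of_mapsTo_ball hdψ (hmψ.mono_right ball_subset_closedBall) hR₁0
    rw [hder.deriv] at this
    calc ‖fderiv ℂ h z u‖ ≤ 64 * ρ' ^ 2 / R₁ := this
    _ = 64 * ρ' * ‖u‖ := by rw [hR₁]; field_simp
  intro z₁ hz₁ z₂ hz₂
  exact Convex.norm_image_sub_le_of_norm_hasFDerivWithin_le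
    (fun x hx => ((hd.differentiableAt (isOpen_ball.mem_nhds (hsub hx))).hasFDerivAt).hasFDerivWithinAt)
    hfd (convex_ball _ _) hz₂ hz₁

end

/-- **Lemma (uniform Koebe-type lemma).**
For `c > 0` and `t' ∈ (0,1)` there exists `r' > 0` such that `B(0,r') ⊆ f(B(0,t'))` for
every holomorphic `f : B^n → B^n` with `f(0) = 0` and `|det df₀| ≥ c`. -/
theorem uniform_koebe_lemma {n : ℕ} :
    ∀ c > 0, ∀ t' ∈ Set.Ioo (0:ℝ) 1, ∃ r' > 0,
      ∀ f : EuclideanSpace ℂ (Fin (n+1)) → EuclideanSpace ℂ (Fin (n+1)),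
        DifferentiableOn ℂ f (Metric.ball 0 1) →
        Set.MapsTo f (Metric.ball 0 1) (Metric.ball 0 1) →
        f 0 = 0 → c ≤ ‖jacDet f 0‖ →
        Metric.ball (0 : EuclideanSpace ℂ (Fin (n+1))) r' ⊆ f '' Metric.ball 0 t' := by
  intro c hc t' ht'
  obtain ⟨ht'0, ht'1⟩ := ht'
  set m : ℕ := n + 1 with hm
  set N : ℝ := (m:ℝ)^2 * m.factorial / c with hNdef
  have hN0 : 0 < N := by positivity
  set ρ' : ℝ := min (t'/2) (min (1/8) (1/(512*N))) with hρ'def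
  have hρ'0 : 0 < ρ' :=
    lt_min (by linarith) (lt_min (by norm_num) (by positivity))
  have hρ'8 : ρ' ≤ 1/8 := le_trans (min_le_right _ _) (min_le_left _ _)
  have hρ'N : ρ' ≤ 1/(512*N) := le_trans (min_le_right _ _) (min_le_right _ _)
  have hρ't : ρ' ≤ t'/2 := min_le_left _ _
  have hNρ' : N * ρ' ≤ 1/512 := by
    calc N * ρ' ≤ N * (1/(512*N)) := by gcongr
    _ = 1/512 := by field_simp
  set ρ : ℝ := ρ'/2 with hρdef
  have hρ0 : 0 < ρ := by positivity
  refine ⟨ρ/(2*N), by positivity, ?_⟩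
  intro f hdf hmapf hf0 hdet
  set A := fderiv ℂ f 0 with hA
  -- Schwarz bounds
  have hfle : ∀ z ∈ Metric.ball (0:EuclideanSpace ℂ (Fin (n+1))) 1, ‖f z‖ ≤ ‖z‖ := by
    intro z hz
    have := my_schwarz_map one_pos hdf hmapf hf0 hz
    simpa using this
  have hAle : ∀ v, ‖A v‖ ≤ ‖v‖ := by
    intro v
    have := my_schwarz_fderiv one_pos hdf hmapf hf0 v
    simpa using this
  -- inverse
  obtain ⟨S, hAS, hSle⟩ := my_inverse_bound A hc hAle hdet
  -- the nonlinear part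
  set h : EuclideanSpace ℂ (Fin (n+1)) → EuclideanSpace ℂ (Fin (n+1)) :=
    fun z => f z - A z with hh
  have hball12 : Metric.ball (0:EuclideanSpace ℂ (Fin (n+1))) (1/2) ⊆ Metric.ball 0 1 :=
    Metric.ball_subset_ball (by norm_num)
  have hdh : DifferentiableOn ℂ h (Metric.ball 0 (1/2)) :=
    (hdf.mono hball12).sub (A.differentiable.differentiableOn)
  have hh0 : h 0 = 0 := by simp [hh, hf0]
  have hdh0 : fderiv ℂ h 0 = 0 := by
    have hfa : DifferentiableAt ℂ f 0 :=
      hdf.differentiableAt (Metric.isOpen_ball.mem_nhds (Metric.mem_ball_self one_pos))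
    rw [hh]
    rw [fderiv_fun_sub hfa A.differentiableAt, A.fderiv, ← hA, sub_self]
  have hhbd : ∀ y : EuclideanSpace ℂ (Fin (n+1)),
      y ∈ Metric.ball (0:EuclideanSpace ℂ (Fin (n+1))) (1/2) → ‖h y‖ ≤ 2 * ‖y‖ := by
    intro y hy
    calc ‖h y‖ ≤ ‖f y‖ + ‖A y‖ := norm_sub_le _ _
    _ ≤ ‖y‖ + ‖y‖ := add_le_add (hfle y (hball12 hy)) (hAle y)
    _ = 2 * ‖y‖ := by ring
  have hq : ∀ y : EuclideanSpace ℂ (Fin (n+1)),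
      y ∈ Metric.ball (0:EuclideanSpace ℂ (Fin (n+1))) (1/2) → ‖h y‖ ≤ 8 * ‖y‖ ^ 2 :=
    fun y hy => my_quad_bound hdh hh0 hdh0 hhbd hy
  have hlip := my_lip_bound hdh hq hρ'0 hρ'8
  -- fixed point argument
  intro w hw
  rw [Metric.mem_ball, dist_zero_right] at hw
  have hKball : ∀ z : EuclideanSpace ℂ (Fin (n+1)), z ∈ Metric.closedBall (0:EuclideanSpace ℂ (Fin (n+1))) ρ →
      z ∈ Metric.ball (0:EuclideanSpace ℂ (Fin (n+1))) ρ' := by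
    intro z hz
    rw [Metric.mem_closedBall, dist_zero_right] at hz
    rw [Metric.mem_ball, dist_zero_right]
    calc ‖z‖ ≤ ρ := hz
    _ < ρ' := by rw [hρdef]; linarith
  have hρ'12 : ∀ z : EuclideanSpace ℂ (Fin (n+1)), z ∈ Metric.ball (0:EuclideanSpace ℂ (Fin (n+1))) ρ' →
      z ∈ Metric.ball (0:EuclideanSpace ℂ (Fin (n+1))) (1/2) :=
    fun z hz => Metric.ball_subset_ball (by linarith) hz
  haveI : CompleteSpace (Metric.closedBall (0:EuclideanSpace ℂ (Fin (n+1))) ρ) :=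
    Metric.isClosed_closedBall.isComplete.completeSpace_coe
  haveI : Nonempty (Metric.closedBall (0:EuclideanSpace ℂ (Fin (n+1))) ρ) :=
    ⟨⟨0, Metric.mem_closedBall_self hρ0.le⟩⟩
  -- bound for MapsTo
  have hTbound : ∀ z : EuclideanSpace ℂ (Fin (n+1)), z ∈ Metric.closedBall (0:EuclideanSpace ℂ (Fin (n+1))) ρ →
      ‖S (w - h z)‖ ≤ ρ := by
    intro z hz
    have hz' : ‖z‖ ≤ ρ := by rwa [Metric.mem_closedBall, dist_zero_right] at hz
    have hhz : ‖h z‖ ≤ 8 * ρ ^ 2 := by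
      calc ‖h z‖ ≤ 8 * ‖z‖ ^ 2 := hq z (hρ'12 _ (hKball z hz))
      _ ≤ 8 * ρ ^ 2 := by gcongr
    calc ‖S (w - h z)‖ ≤ N * ‖w - h z‖ := hSle _
    _ ≤ N * (‖w‖ + ‖h z‖) := by gcongr; exact norm_sub_le _ _
    _ ≤ N * (ρ/(2*N) + 8 * ρ ^ 2) := by gcongr
    _ = ρ/2 + 8 * (N * ρ) * ρ := by field_simp
    _ ≤ ρ/2 + 8 * (N * ρ') * ρ := by
        have hρρ' : ρ ≤ ρ' := by rw [hρdef]; linarith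
        gcongr
    _ ≤ ρ/2 + 8 * (1/512) * ρ := by gcongr
    _ ≤ ρ/2 + ρ/2 := by nlinarith [hρ0.le]
    _ = ρ := by ring
  set T : Metric.closedBall (0:EuclideanSpace ℂ (Fin (n+1))) ρ →
      Metric.closedBall (0:EuclideanSpace ℂ (Fin (n+1))) ρ :=
    fun z => ⟨S (w - h z.1), by
      rw [Metric.mem_closedBall, dist_zero_right]; exact hTbound z.1 z.2⟩ with hT
  have hlipT : LipschitzWith (1/2 : NNReal) T := by
    apply LipschitzWith.of_dist_le_mul
    intro z₁ z₂
    rw [Subtype.dist_eq, Subtype.dist_eq, hT]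
    simp only [dist_eq_norm]
    have h1 : S (w - h z₁.1) - S (w - h z₂.1) = S (h z₂.1 - h z₁.1) := by
      rw [← map_sub]
      congr 1
      abel
    rw [h1]
    calc ‖S (h z₂.1 - h z₁.1)‖ ≤ N * ‖h z₂.1 - h z₁.1‖ := hSle _
    _ ≤ N * (64 * ρ' * ‖z₂.1 - z₁.1‖) := by
        gcongr
        exact hlip _ (hKball _ z₂.2) _ (hKball _ z₁.2)
    _ = 64 * (N * ρ') * ‖z₂.1 - z₁.1‖ := by ring
    _ ≤ 64 * (1/512) * ‖z₂.1 - z₁.1‖ := by gcongr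
    _ ≤ (1/2) * ‖z₂.1 - z₁.1‖ := by
        gcongr ?_ * _
        norm_num
    _ = ((1/2 : NNReal) : ℝ) * ‖z₁.1 - z₂.1‖ := by
        rw [norm_sub_rev]
        norm_num
  have hcontr : ContractingWith (1/2 : NNReal) T :=
    ⟨by rw [← NNReal.coe_lt_coe]; norm_num, hlipT⟩
  set z₀ := ContractingWith.fixedPoint T hcontr with hz₀
  have hfix : T z₀ = z₀ := hcontr.fixedPoint_isFixedPt
  have hv : S (w - h z₀.1) = z₀.1 := by
    have := congrArg Subtype.val hfix
    rw [hT] at this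
    exact this
  have h2 : A z₀.1 = w - h z₀.1 := by
    conv_lhs => rw [← hv]
    rw [hAS]
  have h3 : f z₀.1 = w := by
    have h6 : A z₀.1 + h z₀.1 = w := by rw [h2]; abel
    have h5 : f z₀.1 = A z₀.1 + h z₀.1 := by
      show f z₀.1 = A z₀.1 + (f z₀.1 - A z₀.1)
      abel
    rw [h5, h6]
  refine ⟨z₀.1, ?_, h3⟩
  have hz' : ‖z₀.1‖ ≤ ρ := by
    have := z₀.2
    rwa [Metric.mem_closedBall, dist_zero_right] at this
  rw [Metric.mem_ball, dist_zero_right]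
  calc ‖z₀.1‖ ≤ ρ := hz'
  _ < t' := by rw [hρdef]; linarith
end

section
/- Let ℍ = {ζ ∈ ℂ : Re ζ > 0} and ℍ² = {(z,w) ∈ ℂ² : Re z > |w|²}. Let φ : ℍ → ℂ be holomorphic with Re φ(ζ) > 3 for all ζ ∈ ℍ, and let α > 0 satisfy Re φ(ζ) ≥ α·Re ζ for all ζ ∈ ℍ. Let ε, δ > 0 with ε² < 3/4 and δ ≤ 2, and define Φ(z,w) = (φ(z), √α·δ·w/(1+φ(z)) + ε·z/(1+z)). Then Φ maps ℍ² into ℍ². -/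
open Metric Filter Set Topology

/-- The right half-plane `ℍ = {ζ : Re ζ > 0}`. -/
def rightHalfPlane : Set ℂ := {ζ | 0 < ζ.re}

/-- The Siegel domain `ℍ² = {(z,w) ∈ ℂ² : Re z > |w|²}`. -/
def Siegel2 : Set (ℂ × ℂ) := {p | ‖p.2‖ ^ 2 < p.1.re}

set_option maxHeartbeats 1000000

/-- **Claim (the map `Φ` sends `ℍ²` into `ℍ²`).**
Let `φ : ℍ → ℂ` be holomorphic with `Re φ > 3` on `ℍ` and `Re φ(ζ) ≥ α·Re ζ` for some
`α > 0`. If `ε² < 3/4` and `0 < δ ≤ 2`, then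
`Φ(z,w) = (φ(z), √α·δ·w/(1+φ(z)) + ε·z/(1+z))` maps `ℍ²` into `ℍ²`. -/
theorem siegel_self_map (φ : ℂ → ℂ)
    (hφd : DifferentiableOn ℂ φ rightHalfPlane)
    (hφ3 : ∀ ζ ∈ rightHalfPlane, 3 < (φ ζ).re)
    (α : ℝ) (hα : 0 < α)
    (hαφ : ∀ ζ ∈ rightHalfPlane, α * ζ.re ≤ (φ ζ).re)
    (ε δ : ℝ) (hε : 0 < ε) (hδ : 0 < δ) (hε2 : ε ^ 2 < 3 / 4) (hδ2 : δ ≤ 2)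
    (Φ : ℂ × ℂ → ℂ × ℂ)
    (hΦ : ∀ p : ℂ × ℂ, Φ p =
      (φ p.1, (Real.sqrt α : ℂ) * (δ : ℂ) * p.2 / (1 + φ p.1) + (ε : ℂ) * p.1 / (1 + p.1))) :
    Set.MapsTo Φ Siegel2 Siegel2 := by
  intro p hp
  obtain ⟨z, w⟩ := p
  simp only [Siegel2, Set.mem_setOf_eq] at hp ⊢
  rw [hΦ]
  simp only
  have hz : 0 < z.re := lt_of_le_of_lt (sq_nonneg _) hp
  have hzH : z ∈ rightHalfPlane := hz
  set R : ℝ := (φ z).re with hRdef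
  have hR : 3 < R := hφ3 z hzH
  have hαz : α * z.re ≤ R := hαφ z hzH
  set A : ℝ := ‖w‖
  set B : ℝ := ‖1 + φ z‖
  set C : ℝ := ‖z‖
  set D : ℝ := ‖1 + z‖
  have hB : 1 + R ≤ B := by
    have := Complex.re_le_norm (1 + φ z)
    simpa [B, Complex.add_re] using this
  have hBpos : 0 < B := by linarith
  have hDpos : 0 < D := by
    have := Complex.re_le_norm (1 + z)
    have h2 : (1 + z).re = 1 + z.re := by simp [Complex.add_re]
    simp only [D]
    linarith [this, h2 ▸ this]
  have hCD : C ^ 2 < D ^ 2 := by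
    have h1 : C ^ 2 = Complex.normSq z := Complex.sq_norm z
    have h2 : D ^ 2 = Complex.normSq (1 + z) := Complex.sq_norm (1 + z)
    rw [h1, h2]
    simp only [Complex.normSq_apply, Complex.add_re, Complex.add_im, Complex.one_re,
      Complex.one_im]
    nlinarith
  have hAt : ‖(Real.sqrt α : ℂ) * (δ : ℂ) * w / (1 + φ z)‖
      = Real.sqrt α * δ * A / B := by
    rw [norm_div, norm_mul, norm_mul, Complex.norm_real, Complex.norm_real, Real.norm_eq_abs, Real.norm_eq_abs,
      abs_of_nonneg (Real.sqrt_nonneg α), abs_of_pos hδ]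
  have hBt : ‖(ε : ℂ) * z / (1 + z)‖ = ε * C / D := by
    rw [norm_div, norm_mul, Complex.norm_real, Real.norm_eq_abs, abs_of_pos hε]
  have hsq : Real.sqrt α ^ 2 = α := Real.sq_sqrt hα.le
  have hA2 : α * A ^ 2 < R := by
    have : A ^ 2 < z.re := hp
    nlinarith
  have h1 : (Real.sqrt α * δ * A / B) ^ 2 < R / 4 := by
    rw [div_pow, div_lt_iff₀ (by positivity)]
    have hB2 : (1 + R) ^ 2 ≤ B ^ 2 := by nlinarith
    have h16 : (16 : ℝ) ≤ (1 + R) ^ 2 := by nlinarith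
    have hexp : (Real.sqrt α * δ * A) ^ 2 = α * A ^ 2 * δ ^ 2 := by
      rw [mul_pow, mul_pow, hsq]; ring
    rw [hexp]
    have hδ4 : δ ^ 2 ≤ 4 := by nlinarith
    have hαA : 0 ≤ α * A ^ 2 := mul_nonneg hα.le (sq_nonneg A)
    nlinarith [hA2, hδ4, hB2, h16, hαA, hR]
  have h2 : (ε * C / D) ^ 2 < R / 4 := by
    rw [div_pow, div_lt_iff₀ (by positivity)]
    nlinarith [sq_nonneg C, sq_nonneg ε, mul_pos hε hε]
  have htri := norm_add_le ((Real.sqrt α : ℂ) * (δ : ℂ) * w / (1 + φ z))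
    ((ε : ℂ) * z / (1 + z))
  rw [hAt, hBt] at htri
  have habs1 : 0 ≤ ‖(Real.sqrt α : ℂ) * (δ : ℂ) * w / (1 + φ z) + (ε : ℂ) * z / (1 + z)‖ :=
    norm_nonneg _
  nlinarith [htri, h1, h2, habs1, sq_nonneg (Real.sqrt α * δ * A / B - ε * C / D),
    div_nonneg (by positivity : (0:ℝ) ≤ Real.sqrt α * δ * A) hBpos.le,
    div_nonneg (by positivity : (0:ℝ) ≤ ε * C) hDpos.le]
end

section
/- Let ℍ = {ζ ∈ ℂ : Re ζ > 0} and ℍ² = {(z,w) ∈ ℂ² : Re z > |w|²}. Let φ : ℍ → ℂ be holomorphic with Re φ(ζ) > 3 for all ζ ∈ ℍ, let α > 0 satisfy Re φ(ζ) ≥ α·Re ζ for all ζ ∈ ℍ, and let 0 < R₀ < 1 < R_∞. Assume: whenever z₀, z₁ ∈ ℍ with z₀ ≠ z₁ and φ(z₀) = φ(z₁), then, up to swapping z₀ and z₁, one has |z₀| < R₀ and |z₁| > R_∞. Let ε, δ > 0 satisfy ε·(R_∞/(1+R_∞) − R₀/(1−R₀)) > 2δ, and define Φ(z,w) = (φ(z),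 √α·δ·w/(1+φ(z)) + ε·z/(1+z)). Then Φ is injective on ℍ². -/
open Metric Filter Set Topology

set_option maxHeartbeats 1000000 in
lemma siegel_aux (α ε δ R₀ Rinf : ℝ) (hα : 0 < α) (hε : 0 < ε) (hδ : 0 < δ)
    (hR₀ : 0 < R₀) (hR₀1 : R₀ < 1) (hRinf : 1 < Rinf)
    (hgap : 2 * δ < ε * (Rinf / (1 + Rinf) - R₀ / (1 - R₀)))
    (z₀ z₁ w₀ w₁ f : ℂ)
    (hz₀ : 0 < z₀.re) (hz₁ : 0 < z₁.re)
    (hw₀ : ‖w₀‖ ^ 2 < z₀.re) (hw₁ : ‖w₁‖ ^ 2 < z₁.re)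
    (hF : 0 < f.re) (hαF₀ : α * z₀.re ≤ f.re) (hαF₁ : α * z₁.re ≤ f.re)
    (h0 : ‖z₀‖ < R₀) (h1 : Rinf < ‖z₁‖)
    (heq : (Real.sqrt α : ℂ) * δ * w₀ / (1 + f) + ε * z₀ / (1 + z₀) =
      (Real.sqrt α : ℂ) * δ * w₁ / (1 + f) + ε * z₁ / (1 + z₁)) : False := by
  have habsf : 1 + f.re ≤ ‖1 + f‖ := by
    have := Complex.re_le_norm (1 + f); simpa using this
  have habsz₀ : 1 ≤ ‖1 + z₀‖ := by
    have := Complex.re_le_norm (1 + z₀); simp at this; linarith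
  have habsz₁le : ‖1 + z₁‖ ≤ 1 + ‖z₁‖ := by
    have := norm_add_le 1 z₁; simpa using this
  have habsz₁pos : (0:ℝ) < ‖1 + z₁‖ := by
    have := Complex.re_le_norm (1 + z₁); simp at this; linarith
  -- bound on the w-terms
  have hsq : ∀ w : ℂ, ∀ zr : ℝ, ‖w‖ ^ 2 < zr → α * zr ≤ f.re →
      ‖(Real.sqrt α : ℂ) * δ * w / (1 + f)‖ ≤ δ * Real.sqrt f.re / (1 + f.re) := by
    intro w zr hw hzr
    rw [norm_div, norm_mul, norm_mul]
    simp only [Complex.norm_real, Real.norm_eq_abs, _root_.abs_of_pos hδ,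
      _root_.abs_of_nonneg (Real.sqrt_nonneg α)]
    have h1 : Real.sqrt α * ‖w‖ ≤ Real.sqrt f.re := by
      have e : Real.sqrt α * ‖w‖ = Real.sqrt (α * ‖w‖ ^ 2) := by
        rw [Real.sqrt_mul hα.le, Real.sqrt_sq (norm_nonneg _)]
      rw [e]
      exact Real.sqrt_le_sqrt (by nlinarith)
    have hnum : Real.sqrt α * δ * ‖w‖ ≤ δ * Real.sqrt f.re := by
      nlinarith [Real.sqrt_nonneg α, norm_nonneg w]
    exact div_le_div₀ (by positivity) hnum (by linarith) habsf
  have hb₀ := hsq w₀ z₀.re hw₀ hαF₀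
  have hb₁ := hsq w₁ z₁.re hw₁ hαF₁
  have hhalf : δ * Real.sqrt f.re / (1 + f.re) ≤ δ / 2 := by
    rw [div_le_div_iff₀ (by linarith) (by norm_num)]
    nlinarith [Real.sq_sqrt hF.le, sq_nonneg (Real.sqrt f.re - 1), Real.sqrt_nonneg f.re]
  -- rearranged equation
  have key : (Real.sqrt α : ℂ) * δ * w₀ / (1 + f) - (Real.sqrt α : ℂ) * δ * w₁ / (1 + f) =
      (ε : ℂ) * z₁ / (1 + z₁) - (ε : ℂ) * z₀ / (1 + z₀) := by
    linear_combination heq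
  -- lower bound on the z₁ term
  have hlow₁ : ε * (Rinf / (1 + Rinf)) ≤ ‖(ε : ℂ) * z₁ / (1 + z₁)‖ := by
    rw [norm_div, norm_mul]
    simp only [Complex.norm_real, Real.norm_eq_abs, _root_.abs_of_pos hε]
    have h2 : Rinf / (1 + Rinf) ≤ ‖z₁‖ / (1 + ‖z₁‖) := by
      rw [div_le_div_iff₀ (by linarith) (by positivity)]
      nlinarith
    have h3 : ‖z₁‖ / (1 + ‖z₁‖) ≤ ‖z₁‖ / ‖1 + z₁‖ :=
      div_le_div_of_nonneg_left (norm_nonneg _) habsz₁pos habsz₁le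
    have h4 : ε * (Rinf / (1 + Rinf)) ≤ ε * (‖z₁‖ / ‖1 + z₁‖) :=
      mul_le_mul_of_nonneg_left (le_trans h2 h3) hε.le
    calc ε * (Rinf / (1 + Rinf)) ≤ ε * (‖z₁‖ / ‖1 + z₁‖) := h4
      _ = ε * ‖z₁‖ / ‖1 + z₁‖ := by ring
  -- upper bound on the z₀ term
  have hup₀ : ‖(ε : ℂ) * z₀ / (1 + z₀)‖ ≤ ε * (R₀ / (1 - R₀)) := by
    rw [norm_div, norm_mul]
    simp only [Complex.norm_real, Real.norm_eq_abs, _root_.abs_of_pos hε]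
    have h2a : ε * ‖z₀‖ / ‖1 + z₀‖ ≤ ε * ‖z₀‖ :=
      div_le_self (by positivity) habsz₀
    have h2 : ε * ‖z₀‖ / ‖1 + z₀‖ ≤ ε * R₀ :=
      le_trans h2a (mul_le_mul_of_nonneg_left h0.le hε.le)
    have h3 : ε * R₀ ≤ ε * (R₀ / (1 - R₀)) := by
      have h4 : R₀ ≤ R₀ / (1 - R₀) := by
        rw [le_div_iff₀ (by linarith)]
        nlinarith
      exact mul_le_mul_of_nonneg_left h4 hε.le
    linarith
  -- combine
  have hub : ‖(Real.sqrt α : ℂ) * δ * w₀ / (1 + f) -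
      (Real.sqrt α : ℂ) * δ * w₁ / (1 + f)‖ ≤ δ := by
    have ht : ‖(Real.sqrt α : ℂ) * δ * w₀ / (1 + f) -
        (Real.sqrt α : ℂ) * δ * w₁ / (1 + f)‖ ≤
        ‖(Real.sqrt α : ℂ) * δ * w₀ / (1 + f)‖ +
        ‖(Real.sqrt α : ℂ) * δ * w₁ / (1 + f)‖ := by
      have := norm_sub_le ((Real.sqrt α : ℂ) * δ * w₀ / (1 + f))
        ((Real.sqrt α : ℂ) * δ * w₁ / (1 + f))
      simpa using this
    linarith
  have h5 : ‖(ε : ℂ) * z₁ / (1 + z₁)‖ - ‖(ε : ℂ) * z₀ / (1 + z₀)‖ ≤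
      ‖(ε : ℂ) * z₁ / (1 + z₁) - (ε : ℂ) * z₀ / (1 + z₀)‖ := by
    have := norm_sub_norm_le ((ε : ℂ) * z₁ / (1 + z₁)) ((ε : ℂ) * z₀ / (1 + z₀))
    simpa using this
  rw [key] at hub
  have hfin : ε * (Rinf / (1 + Rinf) - R₀ / (1 - R₀)) =
      ε * (Rinf / (1 + Rinf)) - ε * (R₀ / (1 - R₀)) := by ring
  linarith

/-- **Claim (injectivity of `Φ` on `ℍ²`).**
Let `φ : ℍ → ℂ` be holomorphic with `Re φ > 3` on `ℍ` and `Re φ(ζ) ≥ α·Re ζ` for some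
`α > 0`. Suppose any two distinct points with the same `φ`-value split (up to swapping)
as one of modulus `< R₀` and one of modulus `> R_∞`, where `0 < R₀ < 1 < R_∞`. If
`ε·(R_∞/(1+R_∞) − R₀/(1−R₀)) > 2δ` with `ε, δ > 0`, then
`Φ(z,w) = (φ(z), √α·δ·w/(1+φ(z)) + ε·z/(1+z))` is injective on `ℍ²`. -/
theorem siegel_map_injective (φ : ℂ → ℂ)
    (hφd : DifferentiableOn ℂ φ rightHalfPlane)
    (hφ3 : ∀ ζ ∈ rightHalfPlane, 3 < (φ ζ).re)
    (α : ℝ) (hα : 0 < α)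
    (hαφ : ∀ ζ ∈ rightHalfPlane, α * ζ.re ≤ (φ ζ).re)
    (R₀ Rinf : ℝ) (hR₀ : 0 < R₀) (hR₀1 : R₀ < 1) (hRinf : 1 < Rinf)
    (hφinj : ∀ z₀ ∈ rightHalfPlane, ∀ z₁ ∈ rightHalfPlane, z₀ ≠ z₁ → φ z₀ = φ z₁ →
      (‖z₀‖ < R₀ ∧ Rinf < ‖z₁‖) ∨
      (‖z₁‖ < R₀ ∧ Rinf < ‖z₀‖))
    (ε δ : ℝ) (hε : 0 < ε) (hδ : 0 < δ)
    (hgap : 2 * δ < ε * (Rinf / (1 + Rinf) - R₀ / (1 - R₀)))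
    (Φ : ℂ × ℂ → ℂ × ℂ)
    (hΦ : ∀ p : ℂ × ℂ, Φ p =
      (φ p.1, (Real.sqrt α : ℂ) * (δ : ℂ) * p.2 / (1 + φ p.1) + (ε : ℂ) * p.1 / (1 + p.1))) :
    Set.InjOn Φ Siegel2 := by
  intro p hp q hq heq
  have hp1 : p.1 ∈ rightHalfPlane := by
    have : (0:ℝ) ≤ ‖p.2‖ ^ 2 := by positivity
    exact lt_of_le_of_lt this hp
  have hq1 : q.1 ∈ rightHalfPlane := by
    have : (0:ℝ) ≤ ‖q.2‖ ^ 2 := by positivity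
    exact lt_of_le_of_lt this hq
  rw [hΦ p, hΦ q, Prod.mk.injEq] at heq
  obtain ⟨h1, h2⟩ := heq
  by_cases hz : p.1 = q.1
  · -- same first coordinate: cancel to get equality of second coordinates
    have hfne : (1 + φ q.1) ≠ 0 := by
      intro h
      have := congrArg Complex.re h
      simp at this
      have := hφ3 q.1 hq1
      linarith
    have hcne : (Real.sqrt α : ℂ) * (δ : ℂ) ≠ 0 := by
      have h1 : (Real.sqrt α : ℂ) ≠ 0 := by
        simp only [ne_eq, Complex.ofReal_eq_zero]
        exact (Real.sqrt_pos.mpr hα).ne'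
      have h2 : (δ : ℂ) ≠ 0 := by
        simp only [ne_eq, Complex.ofReal_eq_zero]
        exact hδ.ne'
      exact mul_ne_zero h1 h2
    rw [hz] at h2
    have h2' := add_right_cancel h2
    rw [div_left_inj' hfne, mul_right_inj' hcne] at h2'
    exact Prod.ext hz h2'
  · -- distinct first coordinates: contradiction
    exfalso
    rcases hφinj p.1 hp1 q.1 hq1 hz h1 with ⟨ha, hb⟩ | ⟨ha, hb⟩
    · exact siegel_aux α ε δ R₀ Rinf hα hε hδ hR₀ hR₀1 hRinf hgap p.1 q.1 p.2 q.2 (φ p.1)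
        hp1 hq1 hp hq (by linarith [hφ3 p.1 hp1]) (hαφ p.1 hp1) (h1 ▸ hαφ q.1 hq1) ha hb
        (by rw [h1] at h2 ⊢; exact h2)
    · exact siegel_aux α ε δ R₀ Rinf hα hε hδ hR₀ hR₀1 hRinf hgap q.1 p.1 q.2 p.2 (φ p.1)
        hq1 hp1 hq hp (by linarith [hφ3 p.1 hp1]) (h1 ▸ hαφ q.1 hq1) (hαφ p.1 hp1) ha hb
        (by rw [h1] at h2 ⊢; exact h2.symm)
end
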